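/- Sommerfeld ODE lemma: let c_TF := (3/10)(3π²)^{2/3}, λ ∈ ℝ, b ∈ ℝ, and let Φ : (b, ∞) → ℝ be twice differentiable with Φ(x) < λ for all x > b, satisfying Φ''(x) = −4π (3(λ − Φ(x))/(5 c_TF))^{3/2} for all x > b, lim_{x→+∞} Φ(x) = λ, and lim_{x→+∞} Φ'(x) = 0. Then there exists x_b ≤ b such that for all x > b, Φ(x) = λ − c₁/(x − x_b)⁴, where c₁ := 5⁵ c_TF³/(27 π²). -/

import Mathlib

open Real

/-- The three-dimensional Thomas–Fermi constant. -/
noncomputable def cTF : ℝ := (3 / 10) * (3 * π ^ 2) ^ ((2 : ℝ) / 3)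

/-- The Sommerfeld constant `c₁ = 5⁵ c_TF³ / (27 π²)`. -/
noncomputable def c1 : ℝ := 5 ^ 5 * cTF ^ 3 / (27 * π ^ 2)

lemma cTF_pos : 0 < cTF := by
  have hπ := Real.pi_pos
  unfold cTF
  positivity

/-- MVT on a right-infinite interval. -/
lemma mvt_Ioi {b : ℝ} {f g : ℝ → ℝ} (hd : ∀ x, b < x → HasDerivAt f (g x) x)
    {x y : ℝ} (hx : b < x) (hxy : x < y) :
    ∃ c, x < c ∧ c < y ∧ g c = (f y - f x) / (y - x) := by
  have hcont : ContinuousOn f (Set.Icc x y) := fun t ht =>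
    ((hd t (lt_of_lt_of_le hx ht.1)).continuousAt).continuousWithinAt
  obtain ⟨c, hc, hc'⟩ := exists_hasDerivAt_eq_slope f g hxy hcont
    (fun t ht => hd t (lt_trans hx ht.1))
  exact ⟨c, hc.1, hc.2, hc'⟩

theorem stmt12 (lam b : ℝ) (Φ Φ' Φ'' : ℝ → ℝ)
    (hlt : ∀ x, b < x → Φ x < lam)
    (hd1 : ∀ x, b < x → HasDerivAt Φ (Φ' x) x)
    (hd2 : ∀ x, b < x → HasDerivAt Φ' (Φ'' x) x)
    (hode : ∀ x, b < x →
      Φ'' x = -4 * π * (3 * (lam - Φ x) / (5 * cTF)) ^ ((3 : ℝ) / 2))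
    (hlim : Filter.Tendsto Φ Filter.atTop (nhds lam))
    (hlim' : Filter.Tendsto Φ' Filter.atTop (nhds 0)) :
    ∃ xb : ℝ, xb ≤ b ∧ ∀ x, b < x → Φ x = lam - c1 / (x - xb) ^ 4 := by
  have hπ : (0:ℝ) < π := pi_pos
  have hcTF : (0:ℝ) < cTF := cTF_pos
  set K : ℝ := 4 * π * (3 / (5 * cTF)) ^ ((3:ℝ)/2) with hK
  have hKpos : 0 < K := by positivity
  set u : ℝ → ℝ := fun x => lam - Φ x with hu_def
  have hu : ∀ x, b < x → 0 < u x := fun x hx => sub_pos.mpr (hlt x hx)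
  have hud : ∀ x, b < x → HasDerivAt u (-Φ' x) x := fun x hx => (hd1 x hx).const_sub lam
  have hode' : ∀ x, b < x → Φ'' x = -(K * (u x) ^ ((3:ℝ)/2)) := by
    intro x hx
    rw [hode x hx]
    have h1 : 3 * (lam - Φ x) / (5 * cTF) = (3 / (5 * cTF)) * u x := by
      simp only [hu_def]; ring
    rw [h1, Real.mul_rpow (by positivity) (hu x hx).le, hK]
    ring
  -- energy
  set E : ℝ → ℝ := fun x => (Φ' x)^2 - (4*K/5) * (u x) ^ ((5:ℝ)/2) with hE_def
  have hEd : ∀ x, b < x → HasDerivAt E 0 x := by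
    intro x hx
    have h1 : HasDerivAt (fun y => Φ' y ^ 2) (((2:ℕ):ℝ) * Φ' x ^ (2 - 1) * Φ'' x) x :=
      (hd2 x hx).pow 2
    have h2 : HasDerivAt (fun y => (u y) ^ ((5:ℝ)/2))
        ((-Φ' x) * ((5:ℝ)/2) * (u x) ^ ((5:ℝ)/2 - 1)) x :=
      (hud x hx).rpow_const (Or.inr (by norm_num))
    have h3 : HasDerivAt (fun y => Φ' y ^ 2 - (4*K/5) * (u y) ^ ((5:ℝ)/2))
        (((2:ℕ):ℝ) * Φ' x ^ (2 - 1) * Φ'' x - (4*K/5) * ((-Φ' x) * ((5:ℝ)/2) * (u x) ^ ((5:ℝ)/2 - 1))) x :=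
      h1.sub (h2.const_mul (4*K/5))
    convert h3 using 1
    rw [hode' x hx, show (5:ℝ)/2 - 1 = (3:ℝ)/2 by norm_num]
    push_cast
    ring
  have hEconst : ∀ x, b < x → ∀ y, x < y → E y = E x := by
    intro x hx y hxy
    obtain ⟨c, _, _, hc⟩ := mvt_Ioi (g := fun _ => (0:ℝ)) (fun t ht => hEd t ht) hx hxy
    have hne : y - x ≠ 0 := sub_ne_zero.mpr (ne_of_gt hxy)
    have := hc.symm
    rw [div_eq_zero_iff] at this
    rcases this with h | h
    · linarith
    · exact absurd h hne
  have hulim : Filter.Tendsto u Filter.atTop (nhds 0) := by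
    have := (tendsto_const_nhds (x := lam) (f := Filter.atTop (α := ℝ))).sub hlim
    simpa using this
  have hE0 : ∀ x, b < x → E x = 0 := by
    intro x hx
    have h2 : Filter.Tendsto (fun y => (u y) ^ ((5:ℝ)/2)) Filter.atTop (nhds 0) := by
      have := hulim.rpow_const (p := (5:ℝ)/2) (Or.inr (by norm_num))
      simpa using this
    have h1 : Filter.Tendsto E Filter.atTop (nhds 0) := by
      have h3 := (hlim'.pow 2).sub (h2.const_mul (4*K/5))
      simpa using h3
    have h4 : Filter.Tendsto E Filter.atTop (nhds (E x)) := by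
      refine Filter.Tendsto.congr' ?_ tendsto_const_nhds
      filter_upwards [Filter.eventually_gt_atTop x] with y hy
      exact (hEconst x hx y hy).symm
    exact tendsto_nhds_unique h4 h1
  have hsq : ∀ x, b < x → (Φ' x)^2 = (4*K/5) * (u x) ^ ((5:ℝ)/2) := by
    intro x hx
    have := hE0 x hx
    simp only [hE_def] at this
    linarith
  have hne : ∀ x, b < x → Φ' x ≠ 0 := by
    intro x hx h0
    have h1 := hsq x hx
    rw [h0] at h1
    have h2 : 0 < (4*K/5) * (u x) ^ ((5:ℝ)/2) :=
      mul_pos (by positivity) (Real.rpow_pos_of_pos (hu x hx) _)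
    rw [zero_pow (by norm_num : 2 ≠ 0)] at h1
    linarith
  have hpos : ∀ x, b < x → 0 < Φ' x := by
    intro x hx
    by_contra h
    push_neg at h
    have hneg : Φ' x < 0 := lt_of_le_of_ne h (hne x hx)
    have hall : ∀ y, x ≤ y → Φ' y < 0 := by
      intro y hy
      rcases eq_or_lt_of_le hy with rfl | hy'
      · exact hneg
      by_contra h2
      push_neg at h2
      have h2' : 0 < Φ' y := lt_of_le_of_ne h2 (Ne.symm (hne y (hx.trans hy')))
      have hcont : ContinuousOn Φ' (Set.Icc x y) := fun t ht =>
        ((hd2 t (lt_of_lt_of_le hx ht.1)).continuousAt).continuousWithinAt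
      obtain ⟨c, hc, hc0⟩ := intermediate_value_Icc (le_of_lt hy') hcont
        (Set.mem_Icc.mpr ⟨hneg.le, h2'.le⟩)
      exact hne c (lt_of_lt_of_le hx hc.1) hc0
    have hdec : ∀ y, x < y → Φ y < Φ x := by
      intro y hy
      obtain ⟨c, hc1, _, hc⟩ := mvt_Ioi hd1 hx hy
      have hcneg : Φ' c < 0 := hall c (le_of_lt hc1)
      have hyx : (0:ℝ) < y - x := by linarith
      have h5 : Φ y - Φ x = Φ' c * (y - x) := by
        rw [hc]; field_simp
      nlinarith
    have hle : lam ≤ Φ x := by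
      refine le_of_tendsto hlim ?_
      filter_upwards [Filter.eventually_gt_atTop x] with y hy
      exact (hdec y hy).le
    exact absurd hle (not_le.mpr (hlt x hx))
  -- explicit first-order ODE
  set sC : ℝ := Real.sqrt (4*K/5) with hsC
  have hsCpos : 0 < sC := Real.sqrt_pos.mpr (by positivity)
  have hphi' : ∀ x, b < x → Φ' x = sC * (u x) ^ ((5:ℝ)/4) := by
    intro x hx
    have hupos := hu x hx
    have h1 : (Φ' x)^2 = (sC * (u x) ^ ((5:ℝ)/4))^2 := by
      rw [mul_pow, hsC, Real.sq_sqrt (by positivity : (0:ℝ) ≤ 4*K/5)]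
      rw [← Real.rpow_natCast ((u x) ^ ((5:ℝ)/4)) 2, ← Real.rpow_mul hupos.le]
      rw [show ((5:ℝ)/4 * (2:ℕ)) = (5:ℝ)/2 by push_cast; ring]
      exact hsq x hx
    have h2 : 0 < sC * (u x) ^ ((5:ℝ)/4) :=
      mul_pos hsCpos (Real.rpow_pos_of_pos hupos _)
    calc Φ' x = Real.sqrt ((Φ' x)^2) := (Real.sqrt_sq (hpos x hx).le).symm
      _ = Real.sqrt ((sC * (u x) ^ ((5:ℝ)/4))^2) := by rw [h1]
      _ = sC * (u x) ^ ((5:ℝ)/4) := Real.sqrt_sq h2.le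
  set m : ℝ := sC / 4 with hm
  have hmpos : 0 < m := by positivity
  set v : ℝ → ℝ := fun x => (u x) ^ (-(1:ℝ)/4) with hv
  have hvd : ∀ x, b < x → HasDerivAt v m x := by
    intro x hx
    have hupos := hu x hx
    have h1 : HasDerivAt v ((-Φ' x) * (-(1:ℝ)/4) * (u x) ^ (-(1:ℝ)/4 - 1)) x :=
      (hud x hx).rpow_const (Or.inl (ne_of_gt hupos))
    have h2 : (-Φ' x) * (-(1:ℝ)/4) * (u x) ^ (-(1:ℝ)/4 - 1) = m := by
      rw [hphi' x hx]
      have h3 : (u x) ^ ((5:ℝ)/4) * (u x) ^ (-(1:ℝ)/4 - 1) = 1 := by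
        rw [← Real.rpow_add hupos]
        norm_num
      calc (-(sC * (u x) ^ ((5:ℝ)/4))) * (-(1:ℝ)/4) * (u x) ^ (-(1:ℝ)/4 - 1)
          = (sC/4) * ((u x) ^ ((5:ℝ)/4) * (u x) ^ (-(1:ℝ)/4 - 1)) := by ring
        _ = m := by rw [h3, hm]; ring
    exact h2 ▸ h1
  have hvdiff : ∀ x y, b < x → b < y → v y - v x = m * (y - x) := by
    intro x y hx hy
    rcases lt_trichotomy x y with h | rfl | h
    · obtain ⟨c, _, _, hc⟩ := mvt_Ioi (g := fun _ => m) (fun t ht => hvd t ht) hx h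
      have hne' : y - x ≠ 0 := sub_ne_zero.mpr (ne_of_gt h)
      field_simp at hc
      linarith
    · simp
    · obtain ⟨c, _, _, hc⟩ := mvt_Ioi (g := fun _ => m) (fun t ht => hvd t ht) hy h
      have hne' : x - y ≠ 0 := sub_ne_zero.mpr (ne_of_gt h)
      field_simp at hc
      linarith
  have hx0 : b < b + 1 := lt_add_one b
  set xb : ℝ := (b + 1) - v (b + 1) / m with hxb
  clear_value xb
  have hvx : ∀ x, b < x → v x = m * (x - xb) := by
    intro x hx
    have hm' : m ≠ 0 := ne_of_gt hmpos
    have h1 : v x = v (b+1) + m * (x - (b+1)) := by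
      have := hvdiff (b+1) x hx0 hx
      linarith
    rw [h1, hxb]
    field_simp
    ring
  have hvpos : ∀ x, b < x → 0 < v x := fun x hx => Real.rpow_pos_of_pos (hu x hx) _
  have hxblt : ∀ x, b < x → xb < x := by
    intro x hx
    have h := hvpos x hx
    rw [hvx x hx] at h
    nlinarith
  have hxble : xb ≤ b := by
    by_contra h
    push_neg at h
    have := hxblt ((b + xb)/2) (by linarith)
    linarith
  -- constant computation
  have hsC2 : sC^2 = 4*K/5 := Real.sq_sqrt (by positivity)
  have hr3 : ((3 / (5*cTF)) ^ ((3:ℝ)/2))^2 = (3/(5*cTF))^(3:ℕ) := by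
    rw [← Real.rpow_natCast ((3/(5*cTF)) ^ ((3:ℝ)/2)) 2, ← Real.rpow_mul (by positivity)]
    rw [show ((3:ℝ)/2 * (2:ℕ)) = ((3:ℕ):ℝ) by push_cast; ring]
    exact Real.rpow_natCast _ 3
  have hK2 : K^2 = 16*π^2 * (3/(5*cTF))^(3:ℕ) := by
    rw [hK, mul_pow, mul_pow, hr3]; ring
  have hm4 : m^4 = 27*π^2 / (3125 * cTF^3) := by
    have h1 : m^4 = (sC^2)^2 / 256 := by rw [hm]; ring
    rw [h1, hsC2, show (4*K/5)^2 = 16 * K^2/25 by ring, hK2]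
    have h3 : (3/(5*cTF))^(3:ℕ) = 27 / (125 * cTF^3) := by
      field_simp; ring
    rw [h3]
    field_simp
    ring
  have hc1m : c1 * m^4 = 1 := by
    have hc1 : c1 = 5^5 * cTF^3 / (27 * π^2) := rfl
    rw [hm4, hc1]
    field_simp
    ring
  refine ⟨xb, hxble, fun x hx => ?_⟩
  have hupos := hu x hx
  have hxxb : (0:ℝ) < x - xb := sub_pos.mpr (hxblt x hx)
  have h1 : (v x)^(4:ℕ) * u x = 1 := by
    have h0 : (v x)^(4:ℕ) = (u x) ^ (-(1:ℝ)) := by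
      show (((u x) ^ (-(1:ℝ)/4)))^(4:ℕ) = (u x) ^ (-(1:ℝ))
      rw [← Real.rpow_natCast ((u x) ^ (-(1:ℝ)/4)) 4, ← Real.rpow_mul hupos.le]
      norm_num
    rw [h0, Real.rpow_neg_one]
    exact inv_mul_cancel₀ (ne_of_gt hupos)
  rw [hvx x hx] at h1
  have hux : u x = c1 / (x - xb)^4 := by
    rw [eq_div_iff (by positivity)]
    rw [mul_pow] at h1
    linear_combination c1 * h1 - (u x * (x - xb)^4) * hc1m
  have : Φ x = lam - u x := by simp only [hu_def]; ring
  rw [this, hux]
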